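/- Let α ∈ ℝ, and in ℝ³ with standard basis vectors e₁, e₂, e₃ set v⁺ = (e₃ + α·e₁)/√(1+α²) and v⁻ = (e₃ − α·e₁)/√(1+α²). Let ν be the measure on ℝ³ given by ν = δ_{e₁} + δ_{−e₁} + δ_{e₂} + δ_{−e₂} + (√(1+α²)/2)·(δ_{v⁺} + δ_{v⁻}) + δ_{−e₃}, a finite positive combination of Dirac measures supported on the unit sphere. Then: (a) the Bochner integral of the identity with respect to ν vanishes, ∫ x dν(x) = 0; and (b) for every two-dimensional linear subspace Π ⊆ ℝ³, ν(ℝ³ ∖ Π) > 0. -/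

import Mathlib

open MeasureTheory

lemma my_integrable_dirac {X E : Type*} [MeasurableSpace X] [MeasurableSingletonClass X]
    [NormedAddCommGroup E] (f : X → E) (hf : StronglyMeasurable f) (a : X) :
    Integrable f (Measure.dirac a) :=
  ⟨hf.aestronglyMeasurable, by
    simp [HasFiniteIntegral, lintegral_dirac]⟩

theorem house_measure_satisfies_alexandrov_conditions
    (α : ℝ)
    (e₁ e₂ e₃ vp vm : EuclideanSpace ℝ (Fin 3))
    (he₁ : e₁ = EuclideanSpace.single 0 1)
    (he₂ : e₂ = EuclideanSpace.single 1 1)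
    (he₃ : e₃ = EuclideanSpace.single 2 1)
    (hvp : vp = (Real.sqrt (1 + α ^ 2))⁻¹ • (e₃ + α • e₁))
    (hvm : vm = (Real.sqrt (1 + α ^ 2))⁻¹ • (e₃ - α • e₁))
    (ν : Measure (EuclideanSpace ℝ (Fin 3)))
    (hν : ν = Measure.dirac e₁ + Measure.dirac (-e₁) + Measure.dirac e₂ +
      Measure.dirac (-e₂) +
      ENNReal.ofReal (Real.sqrt (1 + α ^ 2) / 2) •
        (Measure.dirac vp + Measure.dirac vm) +
      Measure.dirac (-e₃)) :
    (∫ x, x ∂ν = 0) ∧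
    (∀ P : Submodule ℝ (EuclideanSpace ℝ (Fin 3)), Module.finrank ℝ P = 2 →
      0 < ν ((P : Set (EuclideanSpace ℝ (Fin 3)))ᶜ)) := by
  set s := Real.sqrt (1 + α ^ 2) with hsdef
  have hs : 0 < s := Real.sqrt_pos.2 (by positivity)
  constructor
  · have hid : StronglyMeasurable (id : EuclideanSpace ℝ (Fin 3) → EuclideanSpace ℝ (Fin 3)) :=
      measurable_id.stronglyMeasurable
    have hint : ∀ a : EuclideanSpace ℝ (Fin 3),
        Integrable (fun x => x) (Measure.dirac a) := fun a => my_integrable_dirac _ hid a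
    have h5 : Integrable (fun x : EuclideanSpace ℝ (Fin 3) => x)
        (ENNReal.ofReal (s / 2) • (Measure.dirac vp + Measure.dirac vm)) :=
      ((hint vp).add_measure (hint vm)).smul_measure ENNReal.ofReal_ne_top
    rw [hν,
      integral_add_measure ((((((hint e₁).add_measure (hint (-e₁))).add_measure
        (hint e₂)).add_measure (hint (-e₂))).add_measure h5)) (hint (-e₃)),
      integral_add_measure ((((hint e₁).add_measure (hint (-e₁))).add_measure
        (hint e₂)).add_measure (hint (-e₂))) h5,
      integral_add_measure (((hint e₁).add_measure (hint (-e₁))).add_measure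
        (hint e₂)) (hint (-e₂)),
      integral_add_measure ((hint e₁).add_measure (hint (-e₁))) (hint e₂),
      integral_add_measure (hint e₁) (hint (-e₁)),
      integral_smul_measure,
      integral_add_measure (hint vp) (hint vm)]
    simp only [integral_dirac]
    rw [ENNReal.toReal_ofReal (by positivity)]
    have hkey : (s / 2) • (vp + vm) = e₃ := by
      rw [hvp, hvm]
      match_scalars <;> field_simp <;> ring
    rw [hkey]
    abel
  · intro P hP
    by_contra h
    have hc : IsClosed (P : Set (EuclideanSpace ℝ (Fin 3))) := P.closed_of_finiteDimensional
    have hm : MeasurableSet ((P : Set (EuclideanSpace ℝ (Fin 3)))ᶜ) :=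
      hc.measurableSet.compl
    push_neg at h
    have h0 : ν ((P : Set (EuclideanSpace ℝ (Fin 3)))ᶜ) = 0 := le_antisymm h (zero_le)
    rw [hν] at h0
    simp only [Measure.add_apply, Measure.smul_apply, smul_eq_mul, add_eq_zero] at h0
    have he1P : e₁ ∈ P := by
      by_contra hmem
      have := h0.1.1.1.1.1
      rw [Measure.dirac_apply' _ hm] at this
      simp [Set.indicator_of_mem, hmem] at this
    have he2P : e₂ ∈ P := by
      by_contra hmem
      have := h0.1.1.1.2
      rw [Measure.dirac_apply' _ hm] at this
      simp [Set.indicator_of_mem, hmem] at this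
    have he3P : e₃ ∈ P := by
      have := h0.2
      rw [Measure.dirac_apply' _ hm] at this
      simp only [Set.indicator, Set.mem_compl_iff, SetLike.mem_coe] at this
      by_contra hmem
      have hne3 : -e₃ ∈ P := by
        by_contra hmem'
        simp [hmem'] at this
      exact hmem (P.neg_mem_iff.mp hne3)
    have hPtop : P = ⊤ := by
      rw [eq_top_iff]
      intro x _
      have hx : x = x 0 • e₁ + x 1 • e₂ + x 2 • e₃ := by
        subst he₁ he₂ he₃
        ext i
        fin_cases i <;>
          simp [EuclideanSpace.single_apply, PiLp.add_apply, PiLp.smul_apply]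
      rw [hx]
      exact P.add_mem (P.add_mem (P.smul_mem _ he1P) (P.smul_mem _ he2P)) (P.smul_mem _ he3P)
    rw [hPtop] at hP
    simp [finrank_euclideanSpace] at hP
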